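/- Let R be a commutative ring in which every element r satisfies r² = r (i.e., the ideal I₂ generated by {r² - r} is zero). Then for any R-module M, the R-linear map M → Sym²_R(M) sending x to x·x (the square class of x in the symmetric square) is injective. -/

import Mathlib

open TensorProduct

/-- The relations defining the symmetric square: `x ⊗ y - y ⊗ x`. -/
def sym2Rel (R M : Type*) [CommRing R] [AddCommGroup M] [Module R M] :
    Submodule R (TensorProduct R M M) :=
  Submodule.span R {z : TensorProduct R M M | ∃ x y : M, z = x ⊗ₜ[R] y - y ⊗ₜ[R] x}

/-- The symmetric square `Sym²_R(M) = (M ⊗ M)/(x⊗y - y⊗x)`. -/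
abbrev Sym2M (R M : Type*) [CommRing R] [AddCommGroup M] [Module R M] :=
  TensorProduct R M M ⧸ sym2Rel R M

/-- If every element of `R` is idempotent (`I₂ = 0`), then the map
`M → Sym²_R(M)`, `x ↦ x·x`, is injective. -/
theorem sq_injective_of_idem {R M : Type*} [CommRing R] [AddCommGroup M] [Module R M]
    (hR : ∀ r : R, r * r = r) :
    Function.Injective
      (fun x : M => (Submodule.Quotient.mk (x ⊗ₜ[R] x) : Sym2M R M)) := by
  intro x y hxy
  by_contra hne
  set z := x - y with hzdef
  have hz0 : z ≠ 0 := sub_ne_zero.mpr hne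
  -- the annihilator of z
  set I : Ideal R := LinearMap.ker (LinearMap.toSpanSingleton R M z) with hIdef
  have hInt : I ≠ ⊤ := by
    intro h
    have h1 : (1 : R) ∈ I := h ▸ Submodule.mem_top
    have : (1 : R) • z = 0 := h1
    rw [one_smul] at this
    exact hz0 this
  obtain ⟨𝔪, hmax, hIm⟩ := Ideal.exists_le_maximal I hInt
  haveI := hmax
  -- z is not in 𝔪 • ⊤
  have hzm : z ∉ (𝔪 • ⊤ : Submodule R M) := by
    intro hmem
    have key : ∀ u ∈ (𝔪 • ⊤ : Submodule R M), ∃ e ∈ 𝔪, e • u = u := by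
      intro u hu
      refine Submodule.smul_induction_on hu ?_ ?_
      · intro r hr n _
        exact ⟨r, hr, by rw [smul_smul, hR r]⟩
      · rintro u v ⟨e, he, heu⟩ ⟨e', he', he'v⟩
        refine ⟨e + e' - e * e', Ideal.sub_mem _ (Ideal.add_mem _ he he')
          (Ideal.mul_mem_right _ _ he), ?_⟩
        have h1 : (e + e' - e * e') • u = u := by
          rw [sub_smul, add_smul, mul_comm, mul_smul, heu]; abel
        have h2 : (e + e' - e * e') • v = v := by
          rw [sub_smul, add_smul, mul_smul, he'v]; abel
        rw [smul_add, h1, h2]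
    obtain ⟨e, he, hez⟩ := key z hmem
    have h1e : (1 - e) ∈ I := by
      have : (1 - e) • z = 0 := by rw [sub_smul, one_smul, hez, sub_self]
      exact this
    have : (1 : R) ∈ 𝔪 := by
      have := Ideal.add_mem 𝔪 (hIm h1e) he
      simpa using this
    exact hmax.ne_top (Ideal.eq_top_of_isUnit_mem _ this isUnit_one)
  set k := R ⧸ 𝔪 with hkdef
  letI : Field k := Ideal.Quotient.field 𝔪
  set V := M ⧸ (𝔪 • ⊤ : Submodule R M) with hVdef
  have hzbar : (Submodule.Quotient.mk z : V) ≠ 0 := by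
    rw [Ne, Submodule.Quotient.mk_eq_zero]
    exact hzm
  haveI : IsScalarTower R k V :=
    Module.IsTorsionBySet.isScalarTower (Module.isTorsionBySet_quotient_ideal_smul M 𝔪)
  -- a k-linear functional on V sending z̄ to 1
  obtain ⟨g, hg⟩ := (LinearMap.toSpanSingleton k V
    (Submodule.Quotient.mk z)).exists_leftInverse_of_injective
    (LinearMap.ker_toSpanSingleton (R := k) (M := V) hzbar)
  have hgz : g (Submodule.Quotient.mk z) = 1 := by
    have := LinearMap.congr_fun hg 1
    simpa [LinearMap.toSpanSingleton_apply] using this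
  -- the induced R-linear functional on M
  set f : M →ₗ[R] k :=
    (g.restrictScalars R).comp (𝔪 • (⊤ : Submodule R M)).mkQ with hfdef
  have hfz : f z = 1 := hgz
  -- the symmetric bilinear form B(a,b) = f a * f b
  set B : M →ₗ[R] M →ₗ[R] k := LinearMap.mk₂ R (fun a b => f a * f b)
    (fun a a' b => by simp [add_mul])
    (fun r a b => by simp [smul_mul_assoc])
    (fun a b b' => by simp [mul_add])
    (fun r a b => by simp [mul_smul_comm]) with hBdef
  set L : TensorProduct R M M →ₗ[R] k := TensorProduct.lift B with hLdef
  have hLrel : sym2Rel R M ≤ LinearMap.ker L := by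
    rw [sym2Rel, Submodule.span_le]
    rintro _ ⟨a, b, rfl⟩
    simp only [SetLike.mem_coe, LinearMap.mem_ker, map_sub, hLdef, TensorProduct.lift.tmul,
      hBdef, LinearMap.mk₂_apply]
    rw [mul_comm, sub_self]
  have hmem : x ⊗ₜ[R] x - y ⊗ₜ[R] y ∈ sym2Rel R M := (Submodule.Quotient.eq _).mp hxy
  have hL0 : L (x ⊗ₜ[R] x - y ⊗ₜ[R] y) = 0 := hLrel hmem
  rw [map_sub, sub_eq_zero] at hL0
  have hLx : L (x ⊗ₜ[R] x) = f x * f x := by simp [hLdef, hBdef]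
  have hLy : L (y ⊗ₜ[R] y) = f y * f y := by simp [hLdef, hBdef]
  rw [hLx, hLy] at hL0
  -- idempotency descends to k
  have hk : ∀ t : k, t * t = t := by
    intro t
    obtain ⟨r, rfl⟩ := Ideal.Quotient.mk_surjective t
    rw [← map_mul, hR r]
  rw [hk (f x), hk (f y)] at hL0
  have : f z = 0 := by rw [hzdef, map_sub, hL0, sub_self]
  rw [hfz] at this
  exact one_ne_zero this
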